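/- Let G be compact acting smoothly on M, and suppose a closed normal subgroup K of a compact group G̃ with G̃/K ≅ G acts with Q → M a G̃-equivariant principal K-bundle with invariant connection, constructed over a test manifold X from a principal G-bundle with connection (P, Θ_P) → X and an equivariant map f : P → M. Then the form Θ_{f*Q} = π_P*Θ_P ⊕ (f̃*Θ_Q − ι_{π_P*Θ_P} f̃*Θ_Q) ∈ Ω¹(f*Q) ⊗ (g ⊕ k) is a principal connection on the principal G̃-bundle f*Q → X: it is G̃-equivariant and satisfies ι_{ξ₁⊕ξ₂} Θ_{f*Q} = ξ₁ ⊕ ξ₂ for all ξ₁⊕ξ₂ ∈ g ⊕ k. -/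

import Mathlib

/-!  Setting: `1 → K → G̃ → G → 1` with a fixed Lie algebra splitting
`𝔤̃ ≅ 𝔤 ⊕ 𝔨` (modeled here, as in the main case of interest, by `G̃ = G × K`
and `𝔤 × 𝔨`).  `Q → M` is a `G̃`-equivariant principal `K`-bundle with invariant
connection `Θ_Q`, `(P, Θ_P) → X` is a principal `G`-bundle with connection and
`f : P → M` is `G`-equivariant.  The pullback `F = f*Q ⊆ P × Q` has projections
`πP` to `P` and `f̃` to `Q`, and carries the (free) `G̃ = G × K` action.  The
geometry is modeled through (trivialized) tangent spaces `VF, VP, VQ` with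
tangent maps `dπP, df̃`, group actions `act` with tangent maps `dact`,
fundamental vector fields `fv` (with `fvQg`, `fvQk` the `𝔤`- and `𝔨`-parts on
`Q`), adjoint actions `AdP : G → GL(𝔤)`, `AdK : K → GL(𝔨)`, and the connection
forms `Θ_P : VP → 𝔤`, `Θ_Q : VQ → 𝔨`.  The contraction
`ι_{π_P*Θ_P} f̃*Θ_Q` is the `𝔨`-valued form `v ↦ Θ_Q(fvQg(Θ_P(dπP v)))`,
contraction of `f̃*Θ_Q` along the `𝔤`-valued form `π_P*Θ_P` via the `𝔤`-action
on `Q`. -/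

/-- the 1-form
`Θ_{f*Q} = π_P*Θ_P ⊕ (f̃*Θ_Q − ι_{π_P*Θ_P} f̃*Θ_Q) ∈ Ω¹(f*Q) ⊗ (𝔤 ⊕ 𝔨)` -/
def pullbackConnection
    (𝔤 𝔨 : Type) [AddCommGroup 𝔤] [Module ℝ 𝔤] [AddCommGroup 𝔨] [Module ℝ 𝔨]
    (F P Q : Type)
    (VF VP VQ : Type) [AddCommGroup VF] [Module ℝ VF] [AddCommGroup VP] [Module ℝ VP]
    [AddCommGroup VQ] [Module ℝ VQ]
    (πP : F → P) (ftil : F → Q)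
    (dπP : F → VF →ₗ[ℝ] VP) (dftil : F → VF →ₗ[ℝ] VQ)
    (fvQg : Q → 𝔤 →ₗ[ℝ] VQ)
    (ΘP : P → VP →ₗ[ℝ] 𝔤) (ΘQ : Q → VQ →ₗ[ℝ] 𝔨) (x : F) :
    VF →ₗ[ℝ] 𝔤 × 𝔨 :=
  LinearMap.prod ((ΘP (πP x)).comp (dπP x))
    (((ΘQ (ftil x)).comp (dftil x)) -
      ((ΘQ (ftil x)).comp ((fvQg (ftil x)).comp ((ΘP (πP x)).comp (dπP x)))))

/-- The form
`Θ_{f*Q} = π_P*Θ_P ⊕ (f̃*Θ_Q − ι_{π_P*Θ_P} f̃*Θ_Q) ∈ Ω¹(f*Q) ⊗ (𝔤 ⊕ 𝔨)` is a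
principal connection on the principal `G̃`-bundle `f*Q → X`: it is
`G̃`-equivariant and satisfies `ι_{ξ₁⊕ξ₂} Θ_{f*Q} = ξ₁ ⊕ ξ₂` for all
`ξ₁ ⊕ ξ₂ ∈ 𝔤 ⊕ 𝔨`. -/
theorem pullback_connection_is_principal
    (G K : Type) [Group G] [Group K]
    (𝔤 𝔨 : Type) [AddCommGroup 𝔤] [Module ℝ 𝔤] [AddCommGroup 𝔨] [Module ℝ 𝔨]
    (F P Q : Type)
    (VF VP VQ : Type) [AddCommGroup VF] [Module ℝ VF] [AddCommGroup VP] [Module ℝ VP]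
    [AddCommGroup VQ] [Module ℝ VQ]
    (πP : F → P) (ftil : F → Q)
    (dπP : F → VF →ₗ[ℝ] VP) (dftil : F → VF →ₗ[ℝ] VQ)
    (actF : F → G × K → F) (actP : P → G → P) (actQ : Q → G × K → Q)
    (dactF : F → G × K → VF ≃ₗ[ℝ] VF) (dactP : P → G → VP ≃ₗ[ℝ] VP)
    (dactQ : Q → G × K → VQ ≃ₗ[ℝ] VQ)
    (fvF : F → (𝔤 × 𝔨) →ₗ[ℝ] VF) (fvP : P → 𝔤 →ₗ[ℝ] VP)
    (fvQg : Q → 𝔤 →ₗ[ℝ] VQ) (fvQk : Q → 𝔨 →ₗ[ℝ] VQ)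
    (AdG : G → 𝔤 ≃ₗ[ℝ] 𝔤) (AdK : K → 𝔨 ≃ₗ[ℝ] 𝔨)
    (ΘP : P → VP →ₗ[ℝ] 𝔤) (ΘQ : Q → VQ →ₗ[ℝ] 𝔨)
    -- `Θ_P` is a principal connection on `P`:
    (hΘP_fv : ∀ (p : P) (ξ : 𝔤), ΘP p (fvP p ξ) = ξ)
    (hΘP_equiv : ∀ (p : P) (g : G) (w : VP),
      ΘP (actP p g) (dactP p g w) = AdG g⁻¹ (ΘP p w))
    -- `Θ_Q` is a `G`-invariant principal `K`-connection on `Q`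
    -- (`Θ_Q ∈ (Ω¹(Q) ⊗ 𝔨)^{G×K}`):
    (hΘQ_fvk : ∀ (q : Q) (ζ : 𝔨), ΘQ q (fvQk q ζ) = ζ)
    (hΘQ_equiv : ∀ (q : Q) (gk : G × K) (u : VQ),
      ΘQ (actQ q gk) (dactQ q gk u) = AdK gk.2⁻¹ (ΘQ q u))
    -- compatibilities of the pullback `F = f*Q` with projections and actions:
    (hπ_act : ∀ (x : F) (gk : G × K), πP (actF x gk) = actP (πP x) gk.1)
    (hf_act : ∀ (x : F) (gk : G × K), ftil (actF x gk) = actQ (ftil x) gk)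
    (hdπ_act : ∀ (x : F) (gk : G × K) (v : VF),
      dπP (actF x gk) (dactF x gk v) = dactP (πP x) gk.1 (dπP x v))
    (hdf_act : ∀ (x : F) (gk : G × K) (v : VF),
      dftil (actF x gk) (dactF x gk v) = dactQ (ftil x) gk (dftil x v))
    (hfv_π : ∀ (x : F) (ξζ : 𝔤 × 𝔨), dπP x (fvF x ξζ) = fvP (πP x) ξζ.1)
    (hfv_f : ∀ (x : F) (ξζ : 𝔤 × 𝔨),
      dftil x (fvF x ξζ) = fvQg (ftil x) ξζ.1 + fvQk (ftil x) ξζ.2)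
    (hfvQg_equiv : ∀ (q : Q) (gk : G × K) (ξ : 𝔤),
      dactQ q gk (fvQg q ξ) = fvQg (actQ q gk) (AdG gk.1⁻¹ ξ)) :
    (∀ (x : F) (ξζ : 𝔤 × 𝔨),
      pullbackConnection 𝔤 𝔨 F P Q VF VP VQ πP ftil dπP dftil fvQg ΘP ΘQ x
        (fvF x ξζ) = ξζ) ∧
    (∀ (x : F) (gk : G × K) (v : VF),
      pullbackConnection 𝔤 𝔨 F P Q VF VP VQ πP ftil dπP dftil fvQg ΘP ΘQ
          (actF x gk) (dactF x gk v) =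
        (LinearMap.prodMap (AdG gk.1⁻¹).toLinearMap (AdK gk.2⁻¹).toLinearMap)
          (pullbackConnection 𝔤 𝔨 F P Q VF VP VQ πP ftil dπP dftil fvQg ΘP ΘQ x v)) := by
  constructor
  · intro x ξζ
    simp only [pullbackConnection, LinearMap.prod_apply, LinearMap.comp_apply,
      LinearMap.sub_apply, Function.prod, hfv_π, hfv_f, hΘP_fv, map_add, hΘQ_fvk]
    ext <;> simp
  · intro x gk v
    simp only [pullbackConnection, LinearMap.prod_apply, LinearMap.comp_apply,
      LinearMap.sub_apply, Function.prod, hπ_act, hf_act, hdπ_act, hdf_act,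
      hΘP_equiv, hΘQ_equiv, LinearMap.prodMap_apply, Prod.mk.injEq,
      LinearEquiv.coe_coe, map_sub]
    refine ⟨trivial, ?_⟩
    rw [← hfvQg_equiv, hΘQ_equiv]
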